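/- Let ω be a primitive d-th root of unity and b₁,…,b_s ∈ ℂ* such that the elements b_iω^j (1 ≤ i ≤ s, 1 ≤ j ≤ d) are pairwise distinct. Let A = ℂ[t^{±1}, (t − b_iω^j)^{−1} : 1 ≤ i ≤ s, 1 ≤ j ≤ d] ⊆ ℂ(t). Then the subspace A^ω := {f ∈ A : f(ωt) = f(t)} equals ℂ[t^{±d}] + Σ_{k≥1} Σ_{i=1}^s ℂ·f_{i,k}, where f_{i,k}(t) = Σ_{j=1}^{d} (ω^j t − b_i)^{−k}. -/

import Mathlib

private lemma X_ne_C (c : ℂ) : (RatFunc.X : RatFunc ℂ) ≠ RatFunc.C c := by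
  intro h
  have h2 : (Polynomial.X : Polynomial ℂ) = Polynomial.C c := by
    apply RatFunc.algebraMap_injective ℂ
    rw [RatFunc.algebraMap_X, RatFunc.algebraMap_C]; exact h
  exact Polynomial.X_ne_C c h2

private lemma sub_C_ne (c : ℂ) : (RatFunc.X : RatFunc ℂ) - RatFunc.C c ≠ 0 :=
  sub_ne_zero.mpr (X_ne_C c)

private lemma C_ne (c : ℂ) (hc : c ≠ 0) : (RatFunc.C c : RatFunc ℂ) ≠ 0 := by
  intro h
  apply hc
  apply (RatFunc.C : ℂ →+* RatFunc ℂ).injective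
  rw [map_zero]; exact h

private lemma Csmul (a : ℂ) (y : RatFunc ℂ) : RatFunc.C a * y = a • y := by
  rw [Algebra.smul_def, RatFunc.algebraMap_eq_C]

private lemma id_mulX (c : ℂ) :
    RatFunc.X * (RatFunc.X - RatFunc.C c)⁻¹
      = 1 + RatFunc.C c * (RatFunc.X - RatFunc.C c)⁻¹ := by
  field_simp [sub_C_ne c]
  ring

private lemma id_mulXinv (c : ℂ) (hc : c ≠ 0) :
    (RatFunc.X : RatFunc ℂ)⁻¹ * (RatFunc.X - RatFunc.C c)⁻¹
      = RatFunc.C c⁻¹ * ((RatFunc.X - RatFunc.C c)⁻¹ - RatFunc.X⁻¹) := by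
  have h1 : (RatFunc.X : RatFunc ℂ) ≠ 0 := RatFunc.X_ne_zero
  have h2 := sub_C_ne c
  have h3 := C_ne c hc
  rw [map_inv₀]
  field_simp
  ring

private lemma id_mulUV (c c' : ℂ) (hne : c ≠ c') :
    (RatFunc.X - RatFunc.C c)⁻¹ * ((RatFunc.X : RatFunc ℂ) - RatFunc.C c')⁻¹
      = RatFunc.C (c' - c)⁻¹ *
        ((RatFunc.X - RatFunc.C c')⁻¹ - (RatFunc.X - RatFunc.C c)⁻¹) := by
  have h2 := sub_C_ne c
  have h2' := sub_C_ne c'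
  have key : RatFunc.C (c' - c) * ((RatFunc.X - RatFunc.C c)⁻¹ * (RatFunc.X - RatFunc.C c')⁻¹)
      = (RatFunc.X - RatFunc.C c')⁻¹ - (RatFunc.X - RatFunc.C c)⁻¹ := by
    have e : (RatFunc.C (c' - c) : RatFunc ℂ)
        = (RatFunc.X - RatFunc.C c) - (RatFunc.X - RatFunc.C c') := by
      rw [map_sub]; ring
    rw [e, sub_mul]
    rw [show (RatFunc.X - RatFunc.C c) * ((RatFunc.X - RatFunc.C c)⁻¹ * (RatFunc.X - RatFunc.C c')⁻¹)
        = ((RatFunc.X - RatFunc.C c) * (RatFunc.X - RatFunc.C c)⁻¹) * (RatFunc.X - RatFunc.C c')⁻¹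
        by ring, mul_inv_cancel₀ h2, one_mul]
    rw [show (RatFunc.X - RatFunc.C c') * ((RatFunc.X - RatFunc.C c)⁻¹ * (RatFunc.X - RatFunc.C c')⁻¹)
        = ((RatFunc.X - RatFunc.C c') * (RatFunc.X - RatFunc.C c')⁻¹) * (RatFunc.X - RatFunc.C c)⁻¹
        by ring, mul_inv_cancel₀ h2', one_mul]
  rw [← key, ← mul_assoc, ← map_mul, inv_mul_cancel₀ (sub_ne_zero.mpr (Ne.symm hne)),
    map_one, one_mul]

private lemma mem_mulX (N : Submodule ℂ (RatFunc ℂ)) (c : ℂ) (hc : c ≠ 0)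
    (hX : ∀ n : ℤ, (RatFunc.X : RatFunc ℂ) ^ n ∈ N)
    (hu : ∀ k : ℕ, ((RatFunc.X - RatFunc.C c)⁻¹ : RatFunc ℂ) ^ (k + 1) ∈ N) :
    ∀ (n : ℤ) (k : ℕ), RatFunc.X ^ n * ((RatFunc.X - RatFunc.C c)⁻¹) ^ k ∈ N := by
  set u : RatFunc ℂ := (RatFunc.X - RatFunc.C c)⁻¹ with hu_def
  have hu0 : ∀ k : ℕ, u ^ k ∈ N := by
    intro k
    cases k with
    | zero => simpa using hX 0
    | succ k => exact hu k
  intro n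
  induction n using Int.induction_on with
  | zero => intro k; simpa using hu0 k
  | succ i ih =>
      intro k
      cases k with
      | zero => simpa using hX ((i : ℤ) + 1)
      | succ k =>
          have key : RatFunc.X ^ ((i:ℤ) + 1) * u ^ (k + 1)
              = RatFunc.X ^ (i:ℤ) * u ^ k + c • (RatFunc.X ^ (i:ℤ) * u ^ (k + 1)) := by
            rw [← Csmul]
            have e1 : RatFunc.X ^ ((i:ℤ) + 1) * u ^ (k + 1)
                = (RatFunc.X ^ (i:ℤ) * u ^ k) * (RatFunc.X * u) := by
              rw [zpow_add₀ RatFunc.X_ne_zero (i:ℤ) 1, zpow_one, pow_succ]; ring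
            rw [e1, hu_def, id_mulX c, ← hu_def]
            ring
          rw [key]
          exact N.add_mem (ih k) (N.smul_mem c (ih (k + 1)))
  | pred i ih =>
      intro k
      induction k with
      | zero => simpa using hX (-(i:ℤ) - 1)
      | succ k ihk =>
          have key : RatFunc.X ^ (-(i:ℤ) - 1) * u ^ (k + 1)
              = c⁻¹ • (RatFunc.X ^ (-(i:ℤ)) * u ^ (k + 1))
                - c⁻¹ • (RatFunc.X ^ (-(i:ℤ) - 1) * u ^ k) := by
            rw [← Csmul, ← Csmul]
            have e1 : RatFunc.X ^ (-(i:ℤ) - 1) * u ^ (k + 1)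
                = (RatFunc.X ^ (-(i:ℤ)) * u ^ k) * (RatFunc.X⁻¹ * u) := by
              rw [show (-(i:ℤ) - 1) = -(i:ℤ) + (-1) by ring,
                zpow_add₀ RatFunc.X_ne_zero (-(i:ℤ)) (-1), zpow_neg_one, pow_succ]
              ring
            have e2 : RatFunc.X ^ (-(i:ℤ) - 1) * u ^ k
                = (RatFunc.X ^ (-(i:ℤ)) * u ^ k) * RatFunc.X⁻¹ := by
              rw [show (-(i:ℤ) - 1) = -(i:ℤ) + (-1) by ring,
                zpow_add₀ RatFunc.X_ne_zero (-(i:ℤ)) (-1), zpow_neg_one]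
              ring
            rw [e1, e2, hu_def, id_mulXinv c hc, ← hu_def]
            ring
          rw [key]
          exact N.sub_mem (N.smul_mem _ (ih (k + 1))) (N.smul_mem _ ihk)

private lemma mem_mulUU (N : Submodule ℂ (RatFunc ℂ)) (c c' : ℂ) (hne : c ≠ c')
    (h1 : (1 : RatFunc ℂ) ∈ N)
    (hu : ∀ k : ℕ, ((RatFunc.X - RatFunc.C c)⁻¹ : RatFunc ℂ) ^ (k + 1) ∈ N)
    (hu' : ∀ k : ℕ, ((RatFunc.X - RatFunc.C c')⁻¹ : RatFunc ℂ) ^ (k + 1) ∈ N) :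
    ∀ (k k' : ℕ), ((RatFunc.X - RatFunc.C c)⁻¹ : RatFunc ℂ) ^ k
      * ((RatFunc.X - RatFunc.C c')⁻¹ : RatFunc ℂ) ^ k' ∈ N := by
  set u : RatFunc ℂ := (RatFunc.X - RatFunc.C c)⁻¹ with hu_def
  set v : RatFunc ℂ := (RatFunc.X - RatFunc.C c')⁻¹ with hv_def
  have hu0 : ∀ k : ℕ, u ^ k ∈ N := fun k => by
    cases k with
    | zero => simpa using h1
    | succ k => exact hu k
  have hv0 : ∀ k : ℕ, v ^ k ∈ N := fun k => by
    cases k with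
    | zero => simpa using h1
    | succ k => exact hu' k
  have main : ∀ (m k k' : ℕ), k + k' ≤ m → u ^ k * v ^ k' ∈ N := by
    intro m
    induction m with
    | zero =>
        intro k k' hkk
        have hk : k = 0 := by omega
        have hk' : k' = 0 := by omega
        subst hk; subst hk'; simpa using h1
    | succ m ihm =>
        intro k k' hkk
        match k, k' with
        | 0, k' => simpa using hv0 k'
        | k + 1, 0 => simpa using hu0 (k + 1)
        | k + 1, k' + 1 =>
            have key : u ^ (k + 1) * v ^ (k' + 1)
                = (c' - c)⁻¹ • (u ^ k * v ^ (k' + 1))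
                  - (c' - c)⁻¹ • (u ^ (k + 1) * v ^ k') := by
              rw [← Csmul, ← Csmul]
              have e1 : u ^ (k + 1) * v ^ (k' + 1) = (u ^ k * v ^ k') * (u * v) := by
                rw [pow_succ, pow_succ]; ring
              rw [e1, hu_def, hv_def, id_mulUV c c' hne, ← hu_def, ← hv_def]
              ring
            rw [key]
            exact N.sub_mem (N.smul_mem _ (ihm k (k' + 1) (by omega)))
              (N.smul_mem _ (ihm (k + 1) k' (by omega)))
  intro k k'
  exact main (k + k') k k' le_rfl

private lemma aux_shift {M : Type*} [AddCommGroup M] (d : ℕ) (g : ℤ → M)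
    (hg : ∀ a : ℤ, g (a + d) = g a) :
    ∀ a : ℤ, ∑ m ∈ Finset.range d, g (m + a) = ∑ m ∈ Finset.range d, g m := by
  have key : ∀ a : ℤ, ∑ m ∈ Finset.range d, g (m + (a + 1)) = ∑ m ∈ Finset.range d, g (m + a) := by
    intro a
    have h1 : ∀ m : ℕ, g (↑m + (a + 1)) = g (↑(m + 1) + a) := by
      intro m; congr 1; push_cast; ring
    have h2 := Finset.sum_range_succ' (fun m : ℕ => g (m + a)) d
    have h3 := Finset.sum_range_succ (fun m : ℕ => g (m + a)) d
    have h4 : g (((d:ℕ) : ℤ) + a) = g (((0:ℕ) : ℤ) + a) := by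
      rw [add_comm ((d:ℕ):ℤ) a, hg]; norm_num
    have h5 : (∑ m ∈ Finset.range d, g (↑(m+1) + a)) + g (((0:ℕ):ℤ) + a)
        = (∑ m ∈ Finset.range d, g (↑m + a)) + g (((d:ℕ):ℤ) + a) := h2.symm.trans h3
    rw [h4] at h5
    have h6 := add_right_cancel h5
    calc ∑ m ∈ Finset.range d, g (↑m + (a + 1))
        = ∑ m ∈ Finset.range d, g (↑(m+1) + a) := by simp_rw [h1]
      _ = ∑ m ∈ Finset.range d, g (↑m + a) := h6
  intro a
  induction a using Int.induction_on with
  | zero => simp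
  | succ i ih => rw [key]; exact ih
  | pred i ih =>
      have h := key (-(i:ℤ) - 1)
      rw [show (-(i:ℤ) - 1 + 1) = -(i:ℤ) by ring] at h
      rw [← h]; exact ih


private lemma aux_laurent' (t : Finset ℤ) (coef : ℤ → ℂ)
    (h : ∑ n ∈ t, coef n • (RatFunc.X : RatFunc ℂ) ^ n = 0) :
    ∀ n ∈ t, coef n = 0 := by
  classical
  set N : ℕ := t.sup fun n => (-n).toNat with hN
  have hnn : ∀ n ∈ t, (0:ℤ) ≤ n + N := by
    intro n hn
    have : (-n).toNat ≤ N := Finset.le_sup (f := fun n => (-n).toNat) hn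
    omega
  set p : Polynomial ℂ := ∑ n ∈ t, Polynomial.C (coef n) * Polynomial.X ^ (n + N).toNat with hp
  have hmap : algebraMap (Polynomial ℂ) (RatFunc ℂ) p = 0 := by
    rw [hp, map_sum]
    have hterm : ∀ n ∈ t, algebraMap (Polynomial ℂ) (RatFunc ℂ)
          (Polynomial.C (coef n) * Polynomial.X ^ (n+N).toNat)
        = RatFunc.X ^ ((N:ℕ):ℤ) * (coef n • RatFunc.X ^ n) := by
      intro n hn
      rw [map_mul, map_pow, RatFunc.algebraMap_C, RatFunc.algebraMap_X]
      rw [Algebra.smul_def, RatFunc.algebraMap_eq_C]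
      rw [← zpow_natCast (RatFunc.X : RatFunc ℂ) ((n+N).toNat), Int.toNat_of_nonneg (hnn n hn)]
      rw [zpow_add₀ (RatFunc.X_ne_zero) n ((N:ℕ):ℤ)]
      ring
    rw [Finset.sum_congr rfl hterm, ← Finset.mul_sum, h, mul_zero]
  have hp0 : p = 0 := by
    apply RatFunc.algebraMap_injective ℂ
    rw [hmap, map_zero]
  intro n₀ hn₀
  have hc : p.coeff (n₀ + N).toNat = coef n₀ := by
    rw [hp, Polynomial.finset_sum_coeff]
    rw [Finset.sum_eq_single n₀]
    · simp [Polynomial.coeff_C_mul, Polynomial.coeff_X_pow]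
    · intro n hn hne
      have hne2 : (n₀ + N).toNat ≠ (n + N).toNat := by
        have := hnn n hn; have := hnn n₀ hn₀; omega
      simp [Polynomial.coeff_C_mul, Polynomial.coeff_X_pow, hne2]
    · intro hh; exact absurd hn₀ hh
  rw [hp0] at hc; simpa using hc.symm

private lemma sigma_C (σ : RatFunc ℂ →ₐ[ℂ] RatFunc ℂ) (a : ℂ) :
    σ (RatFunc.C a) = RatFunc.C a := by
  rw [← RatFunc.algebraMap_eq_C]; exact σ.commutes a

private lemma omega_ne (σ : RatFunc ℂ →ₐ[ℂ] RatFunc ℂ) (ω : ℂ)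
    (hσ : σ RatFunc.X = RatFunc.C ω * RatFunc.X) : ω ≠ 0 := by
  intro h
  apply RatFunc.X_ne_zero (K := ℂ)
  apply σ.toRingHom.injective
  rw [show σ.toRingHom RatFunc.X = σ RatFunc.X from rfl, hσ, h, map_zero, zero_mul, map_zero]

private lemma sigma_zpowX (σ : RatFunc ℂ →ₐ[ℂ] RatFunc ℂ) (ω : ℂ)
    (hσ : σ RatFunc.X = RatFunc.C ω * RatFunc.X) (n : ℤ) :
    σ (RatFunc.X ^ n) = RatFunc.C (ω ^ n) * RatFunc.X ^ n := by
  rw [map_zpow₀, hσ, mul_zpow, map_zpow₀ (RatFunc.C : ℂ →+* RatFunc ℂ)]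

private lemma iter_zpowX (σ : RatFunc ℂ →ₐ[ℂ] RatFunc ℂ) (ω : ℂ)
    (hσ : σ RatFunc.X = RatFunc.C ω * RatFunc.X) (n : ℤ) :
    ∀ m : ℕ, σ^[m] (RatFunc.X ^ n) = RatFunc.C ((ω ^ n) ^ m) * RatFunc.X ^ n := by
  intro m
  induction m with
  | zero => simp
  | succ m ih =>
      rw [Function.iterate_succ_apply', ih, map_mul, sigma_C, sigma_zpowX σ ω hσ,
        ← mul_assoc, ← map_mul, pow_succ]

private lemma sigma_g (σ : RatFunc ℂ →ₐ[ℂ] RatFunc ℂ) (ω : ℂ)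
    (hσ : σ RatFunc.X = RatFunc.C ω * RatFunc.X) (hω0 : ω ≠ 0) (bi : ℂ) (e : ℤ) (a : ℤ) :
    σ ((RatFunc.C (ω ^ a) * RatFunc.X - RatFunc.C bi) ^ e)
      = (RatFunc.C (ω ^ (a + 1)) * RatFunc.X - RatFunc.C bi) ^ e := by
  rw [map_zpow₀, map_sub, map_mul, sigma_C, sigma_C, hσ, ← mul_assoc, ← map_mul,
    show ω ^ a * ω = ω ^ (a + 1) by rw [zpow_add₀ hω0 a 1, zpow_one]]

private lemma iter_g (σ : RatFunc ℂ →ₐ[ℂ] RatFunc ℂ) (ω : ℂ)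
    (hσ : σ RatFunc.X = RatFunc.C ω * RatFunc.X) (hω0 : ω ≠ 0) (bi : ℂ) (e : ℤ) :
    ∀ (m : ℕ) (a : ℤ), σ^[m] ((RatFunc.C (ω ^ a) * RatFunc.X - RatFunc.C bi) ^ e)
      = (RatFunc.C (ω ^ (a + m)) * RatFunc.X - RatFunc.C bi) ^ e := by
  intro m
  induction m with
  | zero => intro a; simp
  | succ m ih =>
      intro a
      rw [Function.iterate_succ_apply', ih a, sigma_g σ ω hσ hω0 bi e (a + m)]
      have : (a + (m:ℤ)) + 1 = a + ((m + 1 : ℕ) : ℤ) := by push_cast; ring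
      rw [this]

private lemma iter_C_mul (σ : RatFunc ℂ →ₐ[ℂ] RatFunc ℂ) (a : ℂ) :
    ∀ (m : ℕ) (z : RatFunc ℂ), σ^[m] (RatFunc.C a * z) = RatFunc.C a * σ^[m] z := by
  intro m
  induction m with
  | zero => intro z; simp
  | succ m ih =>
      intro z
      rw [Function.iterate_succ_apply', ih, map_mul, sigma_C, Function.iterate_succ_apply']

private lemma iter_add (σ : RatFunc ℂ →ₐ[ℂ] RatFunc ℂ) :
    ∀ (m : ℕ) (x y : RatFunc ℂ), σ^[m] (x + y) = σ^[m] x + σ^[m] y := by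
  intro m
  induction m with
  | zero => intro x y; simp
  | succ m ih =>
      intro x y
      rw [Function.iterate_succ_apply', ih, map_add, Function.iterate_succ_apply',
        Function.iterate_succ_apply']

private lemma iter_smul (σ : RatFunc ℂ →ₐ[ℂ] RatFunc ℂ) :
    ∀ (m : ℕ) (a : ℂ) (x : RatFunc ℂ), σ^[m] (a • x) = a • σ^[m] x := by
  intro m
  induction m with
  | zero => intro a x; simp
  | succ m ih =>
      intro a x
      rw [Function.iterate_succ_apply', ih, AlgHom.map_smul_of_tower, Function.iterate_succ_apply']

private lemma iter_zero (σ : RatFunc ℂ →ₐ[ℂ] RatFunc ℂ) :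
    ∀ m : ℕ, σ^[m] (0 : RatFunc ℂ) = 0 := by
  intro m
  induction m with
  | zero => simp
  | succ m ih => rw [Function.iterate_succ_apply', ih, map_zero]

private lemma iter_fix (σ : RatFunc ℂ →ₐ[ℂ] RatFunc ℂ) (f : RatFunc ℂ) (h : σ f = f) :
    ∀ m : ℕ, σ^[m] f = f := by
  intro m
  induction m with
  | zero => simp
  | succ m ih => rw [Function.iterate_succ_apply', ih, h]

private def Bset (d s : ℕ) (ω : ℂ) (b : Fin s → ℂ) : Set (RatFunc ℂ) :=
  (Set.range fun n : ℤ => (RatFunc.X : RatFunc ℂ) ^ n) ∪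
  (Set.range fun q : (Fin s × Fin d) × ℕ =>
    ((RatFunc.X - RatFunc.C (b q.1.1 * ω ^ (q.1.2 : ℕ)))⁻¹ : RatFunc ℂ) ^ (q.2 + 1))

private lemma Bset_closed (d s : ℕ) (ω : ℂ) (b : Fin s → ℂ) (hb : ∀ i, b i ≠ 0) (hω0 : ω ≠ 0)
    (hdist : Function.Injective fun p : Fin s × Fin d => b p.1 * ω ^ (p.2 : ℕ)) :
    ∀ x ∈ Bset d s ω b, ∀ y ∈ Bset d s ω b, x * y ∈ Submodule.span ℂ (Bset d s ω b) := by
  set N := Submodule.span ℂ (Bset d s ω b) with hN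
  have hXN : ∀ n : ℤ, (RatFunc.X : RatFunc ℂ) ^ n ∈ N :=
    fun n => Submodule.subset_span (Or.inl ⟨n, rfl⟩)
  have huN : ∀ (p : Fin s × Fin d) (k : ℕ),
      ((RatFunc.X - RatFunc.C (b p.1 * ω ^ (p.2 : ℕ)))⁻¹ : RatFunc ℂ) ^ (k + 1) ∈ N :=
    fun p k => Submodule.subset_span (Or.inr ⟨⟨p, k⟩, rfl⟩)
  have hcne : ∀ p : Fin s × Fin d, b p.1 * ω ^ (p.2 : ℕ) ≠ 0 :=
    fun p => mul_ne_zero (hb _) (pow_ne_zero _ hω0)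
  have h1 : (1 : RatFunc ℂ) ∈ N := by simpa using hXN 0
  rintro x (⟨n, rfl⟩ | ⟨q, rfl⟩) y (⟨m, rfl⟩ | ⟨r, rfl⟩)
  · rw [← zpow_add₀ RatFunc.X_ne_zero]; exact hXN _
  · exact mem_mulX N _ (hcne r.1) hXN (fun k => huN r.1 k) n (r.2 + 1)
  · rw [mul_comm]
    exact mem_mulX N _ (hcne q.1) hXN (fun k => huN q.1 k) m (q.2 + 1)
  · beta_reduce
    by_cases hqr : q.1 = r.1
    · rw [hqr, ← pow_add, show (q.2 + 1) + (r.2 + 1) = (q.2 + r.2 + 1) + 1 by omega]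
      exact huN r.1 _
    · have hne : b q.1.1 * ω ^ ((q.1.2 : ℕ)) ≠ b r.1.1 * ω ^ ((r.1.2 : ℕ)) :=
        fun h => hqr (hdist h)
      exact mem_mulUU N _ _ hne h1 (fun k => huN q.1 k) (fun k => huN r.1 k) (q.2 + 1) (r.2 + 1)

private lemma A_le_spanB (d s : ℕ) (ω : ℂ) (b : Fin s → ℂ) (hb : ∀ i, b i ≠ 0) (hω0 : ω ≠ 0)
    (hdist : Function.Injective fun p : Fin s × Fin d => b p.1 * ω ^ (p.2 : ℕ)) :
    ∀ f ∈ Algebra.adjoin ℂ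
      ({RatFunc.X, (RatFunc.X)⁻¹} ∪ Set.range fun p : Fin s × Fin d =>
        (RatFunc.X - RatFunc.C (b p.1 * ω ^ (p.2 : ℕ)))⁻¹),
      f ∈ Submodule.span ℂ (Bset d s ω b) := by
  set N := Submodule.span ℂ (Bset d s ω b) with hN
  have hXN : ∀ n : ℤ, (RatFunc.X : RatFunc ℂ) ^ n ∈ N :=
    fun n => Submodule.subset_span (Or.inl ⟨n, rfl⟩)
  have huN : ∀ (p : Fin s × Fin d) (k : ℕ),
      ((RatFunc.X - RatFunc.C (b p.1 * ω ^ (p.2 : ℕ)))⁻¹ : RatFunc ℂ) ^ (k + 1) ∈ N :=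
    fun p k => Submodule.subset_span (Or.inr ⟨⟨p, k⟩, rfl⟩)
  have h1 : (1 : RatFunc ℂ) ∈ N := by simpa using hXN 0
  have hmulc := Bset_closed d s ω b hb hω0 hdist
  have hmul2 : ∀ x y : RatFunc ℂ, x ∈ N → y ∈ N → x * y ∈ N := by
    intro x y hx hy
    have hle : N * N ≤ N := by
      rw [hN, Submodule.span_mul_span]
      apply Submodule.span_le.mpr
      rintro z hz
      rw [Set.mem_mul] at hz
      obtain ⟨a, ha, c, hc, rfl⟩ := hz
      exact hmulc a ha c hc
    exact hle (Submodule.mul_mem_mul hx hy)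
  intro f hf
  have hadj : Algebra.adjoin ℂ
      ({RatFunc.X, (RatFunc.X)⁻¹} ∪ Set.range fun p : Fin s × Fin d =>
        (RatFunc.X - RatFunc.C (b p.1 * ω ^ (p.2 : ℕ)))⁻¹) ≤ N.toSubalgebra h1 hmul2 := by
    apply Algebra.adjoin_le
    intro g hg
    simp only [Set.mem_union, Set.mem_insert_iff, Set.mem_singleton_iff, Set.mem_range] at hg
    rcases hg with (rfl | rfl) | ⟨p, rfl⟩
    · show RatFunc.X ∈ N
      simpa using hXN 1
    · show (RatFunc.X : RatFunc ℂ)⁻¹ ∈ N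
      have := hXN (-1)
      rwa [zpow_neg_one] at this
    · show ((RatFunc.X : RatFunc ℂ) - RatFunc.C (b p.1 * ω ^ (p.2 : ℕ)))⁻¹ ∈ N
      have := huN p 0
      rwa [pow_one] at this
  exact hadj hf
theorem stmt_17 (d : ℕ) (ω : ℂ) (hω : IsPrimitiveRoot ω d)
    (s : ℕ) (b : Fin s → ℂ) (hb : ∀ i, b i ≠ 0)
    (hdist : Function.Injective fun p : Fin s × Fin d => b p.1 * ω ^ (p.2 : ℕ))
    (A : Subalgebra ℂ (RatFunc ℂ))
    (hA : A = Algebra.adjoin ℂ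
      ({RatFunc.X, (RatFunc.X)⁻¹} ∪ Set.range fun p : Fin s × Fin d =>
        (RatFunc.X - RatFunc.C (b p.1 * ω ^ (p.2 : ℕ)))⁻¹))
    (σ : RatFunc ℂ →ₐ[ℂ] RatFunc ℂ) (hσ : σ RatFunc.X = RatFunc.C ω * RatFunc.X) :
    ∀ f : RatFunc ℂ,
      (f ∈ A ∧ σ f = f) ↔
      f ∈ Submodule.span ℂ
        ((Set.range fun k : ℤ => RatFunc.X ^ ((d : ℤ) * k)) ∪
          (Set.range fun p : Fin s × ℕ =>
            ∑ j ∈ Finset.range d,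
              (RatFunc.C ω ^ (j + 1) * RatFunc.X - RatFunc.C (b p.1)) ^
                (-(p.2 : ℤ) - 1))) := by
  classical
  intro f
  have hω0 : ω ≠ 0 := omega_ne σ ω hσ
  set Tgen : Set (RatFunc ℂ) :=
    (Set.range fun k : ℤ => RatFunc.X ^ ((d : ℤ) * k)) ∪
      (Set.range fun p : Fin s × ℕ =>
        ∑ j ∈ Finset.range d,
          (RatFunc.C ω ^ (j + 1) * RatFunc.X - RatFunc.C (b p.1)) ^
            (-(p.2 : ℤ) - 1)) with hTgen
  set T : Submodule ℂ (RatFunc ℂ) := Submodule.span ℂ Tgen with hT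
  show (f ∈ A ∧ σ f = f) ↔ f ∈ T
  have hgen1T : ∀ k : ℤ, (RatFunc.X : RatFunc ℂ) ^ ((d : ℤ) * k) ∈ T :=
    fun k => Submodule.subset_span (Or.inl ⟨k, rfl⟩)
  have hgen2T : ∀ p : Fin s × ℕ, (∑ j ∈ Finset.range d,
      (RatFunc.C ω ^ (j + 1) * RatFunc.X - RatFunc.C (b p.1)) ^ (-(p.2 : ℤ) - 1)) ∈ T :=
    fun p => Submodule.subset_span (Or.inr ⟨p, rfl⟩)
  -- periodicity
  have hper : ∀ (bi : ℂ) (e : ℤ) (a : ℤ),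
      (fun a : ℤ => (RatFunc.C (ω ^ a) * RatFunc.X - RatFunc.C bi) ^ e) (a + (d:ℤ))
        = (fun a : ℤ => (RatFunc.C (ω ^ a) * RatFunc.X - RatFunc.C bi) ^ e) a := by
    intro bi e a
    simp only []
    rw [zpow_add₀ hω0, zpow_natCast, hω.pow_eq_one, mul_one]
  -- σ fixes the generators of T
  have hσgen : ∀ g ∈ Tgen, σ g = g := by
    rintro g (⟨k, rfl⟩ | ⟨p, rfl⟩)
    · beta_reduce
      rw [sigma_zpowX σ ω hσ, show ω ^ ((d:ℤ) * k) = 1 by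
        rw [zpow_mul, zpow_natCast, hω.pow_eq_one, one_zpow], map_one, one_mul]
    · beta_reduce
      set g0 : ℤ → RatFunc ℂ :=
        fun a => (RatFunc.C (ω ^ a) * RatFunc.X - RatFunc.C (b p.1)) ^ (-(p.2:ℤ) - 1) with hg0
      have hgper : ∀ a : ℤ, g0 (a + (d:ℤ)) = g0 a := fun a => hper (b p.1) (-(p.2:ℤ) - 1) a
      have hsum_eq : (∑ j ∈ Finset.range d,
            (RatFunc.C ω ^ (j + 1) * RatFunc.X - RatFunc.C (b p.1)) ^ (-(p.2:ℤ) - 1))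
          = ∑ j ∈ Finset.range d, g0 ((j:ℤ) + 1) := by
        refine Finset.sum_congr rfl fun j _ => ?_
        simp only [hg0]
        rw [show ((j:ℤ) + 1) = ((j + 1 : ℕ) : ℤ) by push_cast; ring, zpow_natCast, map_pow]
      rw [hsum_eq, map_sum]
      have hstep : ∀ j : ℕ, σ (g0 ((j:ℤ) + 1)) = g0 ((j:ℤ) + 2) := by
        intro j
        simp only [hg0]
        rw [sigma_g σ ω hσ hω0 (b p.1) (-(p.2:ℤ) - 1) ((j:ℤ) + 1),
          show (j:ℤ) + 1 + 1 = (j:ℤ) + 2 by ring]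
      rw [Finset.sum_congr rfl fun j _ => hstep j]
      rw [aux_shift d g0 hgper 2, ← aux_shift d g0 hgper 1]
  -- generators of T are in A
  have hXA : RatFunc.X ∈ A := by
    rw [hA]; exact Algebra.subset_adjoin (Or.inl (Set.mem_insert _ _))
  have hXiA : (RatFunc.X : RatFunc ℂ)⁻¹ ∈ A := by
    rw [hA]; exact Algebra.subset_adjoin (Or.inl (Set.mem_insert_of_mem _ rfl))
  have huA : ∀ p : Fin s × Fin d,
      ((RatFunc.X - RatFunc.C (b p.1 * ω ^ (p.2 : ℕ)))⁻¹ : RatFunc ℂ) ∈ A := fun p => by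
    rw [hA]; exact Algebra.subset_adjoin (Or.inr ⟨p, rfl⟩)
  have hXzA : ∀ n : ℤ, (RatFunc.X : RatFunc ℂ) ^ n ∈ A := by
    intro n
    rcases Int.eq_nat_or_neg n with ⟨m, rfl | rfl⟩
    · rw [zpow_natCast]; exact pow_mem hXA m
    · rw [zpow_neg, zpow_natCast, ← inv_pow]; exact pow_mem hXiA m
  have hCA : ∀ a : ℂ, RatFunc.C a ∈ A := fun a => by
    rw [← RatFunc.algebraMap_eq_C]; exact A.algebraMap_mem a
  have hTgenA : ∀ g ∈ Tgen, g ∈ A := by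
    rintro g (⟨k, rfl⟩ | ⟨p, rfl⟩)
    · exact hXzA _
    · beta_reduce
      apply sum_mem
      intro j hj
      have hjd : j < d := Finset.mem_range.mp hj
      have hm : j + 1 + (d - 1 - j) = d := by omega
      have hinv : ω ^ (j + 1) * ω ^ (d - 1 - j) = 1 := by
        rw [← pow_add, hm, hω.pow_eq_one]
      have hxc : RatFunc.C ω ^ (j + 1) * RatFunc.X - RatFunc.C (b p.1)
          = RatFunc.C (ω ^ (j + 1)) *
            (RatFunc.X - RatFunc.C (b p.1 * ω ^ (d - 1 - j))) := by
        rw [mul_sub, ← map_pow, ← map_mul,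
          show ω ^ (j + 1) * (b p.1 * ω ^ (d - 1 - j))
            = b p.1 * (ω ^ (j + 1) * ω ^ (d - 1 - j)) by ring, hinv, mul_one]
      rw [hxc, mul_zpow]
      apply A.mul_mem
      · rw [← map_zpow₀ (RatFunc.C : ℂ →+* RatFunc ℂ)]; exact hCA _
      · rw [show -((p.2:ℕ):ℤ) - 1 = -(((p.2 + 1 : ℕ)):ℤ) by push_cast; ring,
          zpow_neg, zpow_natCast, ← inv_pow]
        exact pow_mem (huA (p.1, ⟨d - 1 - j, by omega⟩)) (p.2 + 1)
  constructor
  · rintro ⟨hfA, hfix⟩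
    have hfN : f ∈ Submodule.span ℂ (Bset d s ω b) :=
      A_le_spanB d s ω b hb hω0 hdist f (hA ▸ hfA)
    by_cases hd : d = 0
    · subst hd
      have hfN2 : f ∈ Submodule.span ℂ (Set.range fun n : ℤ => (RatFunc.X : RatFunc ℂ) ^ n) := by
        refine Submodule.span_le.mpr ?_ hfN
        rintro x (hx | ⟨q, rfl⟩)
        · exact Submodule.subset_span hx
        · exact q.1.2.elim0
      obtain ⟨F, hF⟩ := Finsupp.mem_span_range_iff_exists_finsupp.mp hfN2
      rw [Finsupp.sum] at hF
      have hσf : σ f = ∑ n ∈ F.support, F n • (RatFunc.C (ω ^ n) * RatFunc.X ^ n) := by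
        rw [← hF, map_sum]
        exact Finset.sum_congr rfl fun n _ => by rw [AlgHom.map_smul_of_tower, sigma_zpowX σ ω hσ]
      have hzero : ∑ n ∈ F.support, (F n * (1 - ω ^ n)) • (RatFunc.X : RatFunc ℂ) ^ n = 0 := by
        have hsub : f - σ f = 0 := by rw [hfix, sub_self]
        calc ∑ n ∈ F.support, (F n * (1 - ω ^ n)) • (RatFunc.X : RatFunc ℂ) ^ n
            = ∑ n ∈ F.support, (F n • (RatFunc.X : RatFunc ℂ) ^ n
                - F n • (RatFunc.C (ω ^ n) * RatFunc.X ^ n)) := by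
              refine Finset.sum_congr rfl fun n _ => ?_
              rw [Csmul, smul_smul, ← sub_smul]
              congr 1
              ring
          _ = (∑ n ∈ F.support, F n • (RatFunc.X : RatFunc ℂ) ^ n)
              - ∑ n ∈ F.support, F n • (RatFunc.C (ω ^ n) * RatFunc.X ^ n) :=
            Finset.sum_sub_distrib _ _
          _ = f - σ f := by rw [hF, ← hσf]
          _ = 0 := hsub
      have hcoef := aux_laurent' F.support (fun n => F n * (1 - ω ^ n)) hzero
      have hsupp : F.support ⊆ {0} := by
        intro n hn
        rw [Finset.mem_singleton]
        by_contra hne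
        have h2 : ω ^ n ≠ 1 := by
          intro he
          have hdvd := (hω.zpow_eq_one_iff_dvd n).mp he
          rw [Nat.cast_zero, zero_dvd_iff] at hdvd
          exact hne hdvd
        have h1 := hcoef n hn
        rcases mul_eq_zero.mp h1 with h | h
        · exact Finsupp.mem_support_iff.mp hn h
        · exact h2 (sub_eq_zero.mp h).symm
      have hf1 : f = F 0 • (1 : RatFunc ℂ) := by
        rw [← hF]
        rw [Finset.sum_subset hsupp (fun x _ hx => by
          rw [Finsupp.notMem_support_iff.mp hx, zero_smul])]
        rw [Finset.sum_singleton, zpow_zero]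
      rw [hf1]
      refine T.smul_mem _ ?_
      have h1T := hgen1T 0
      rwa [mul_zero, zpow_zero] at h1T
    · have hgenT : ∀ g ∈ Bset d s ω b, (∑ m ∈ Finset.range d, σ^[m] g) ∈ T := by
        rintro g (⟨n, rfl⟩ | ⟨⟨⟨i, j⟩, k⟩, rfl⟩)
        · show (∑ m ∈ Finset.range d, σ^[m] ((RatFunc.X : RatFunc ℂ) ^ n)) ∈ T
          rw [Finset.sum_congr rfl fun m _ => iter_zpowX σ ω hσ n m, ← Finset.sum_mul,
            ← map_sum]
          by_cases hdn : (d:ℤ) ∣ n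
          · obtain ⟨k, rfl⟩ := hdn
            have hω1 : ω ^ ((d:ℤ) * k) = 1 := by
              rw [zpow_mul, zpow_natCast, hω.pow_eq_one, one_zpow]
            rw [hω1]
            simp only [one_pow]
            rw [Finset.sum_const, Finset.card_range, nsmul_eq_mul, mul_one, Csmul]
            exact T.smul_mem _ (hgen1T k)
          · have hζ1 : ω ^ n ≠ 1 := fun h => hdn ((hω.zpow_eq_one_iff_dvd n).mp h)
            have hζd : (ω ^ n) ^ d = 1 := by
              rw [← zpow_natCast (ω ^ n) d, ← zpow_mul, mul_comm, zpow_mul, zpow_natCast,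
                hω.pow_eq_one, one_zpow]
            rw [geom_sum_eq hζ1 d, hζd, sub_self, zero_div, map_zero, zero_mul]
            exact T.zero_mem
        · show (∑ m ∈ Finset.range d,
              σ^[m] (((RatFunc.X - RatFunc.C (b i * ω ^ (j:ℕ)))⁻¹ : RatFunc ℂ) ^ (k+1))) ∈ T
          set g0 : ℤ → RatFunc ℂ :=
            fun a => (RatFunc.C (ω ^ a) * RatFunc.X - RatFunc.C (b i)) ^ (-(k:ℤ) - 1) with hg0
          have hgper : ∀ a : ℤ, g0 (a + (d:ℤ)) = g0 a := fun a => hper (b i) (-(k:ℤ) - 1) a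
          have hrepr : ((RatFunc.X - RatFunc.C (b i * ω ^ (j:ℕ)))⁻¹ : RatFunc ℂ) ^ (k+1)
              = RatFunc.C ((ω ^ ((j:ℕ):ℤ)) ^ (-(k:ℤ) - 1)) * g0 (-((j:ℕ):ℤ)) := by
            have hx : (RatFunc.X : RatFunc ℂ) - RatFunc.C (b i * ω ^ (j:ℕ))
                = RatFunc.C (ω ^ ((j:ℕ):ℤ))
                  * (RatFunc.C (ω ^ (-((j:ℕ):ℤ))) * RatFunc.X - RatFunc.C (b i)) := by
              rw [mul_sub, ← mul_assoc, ← map_mul, ← map_mul,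
                show ω ^ ((j:ℕ):ℤ) * ω ^ (-((j:ℕ):ℤ)) = 1 by
                  rw [← zpow_add₀ hω0]; norm_num,
                map_one, one_mul,
                show ω ^ ((j:ℕ):ℤ) * b i = b i * ω ^ (j:ℕ) by rw [zpow_natCast]; ring]
            have hzp : ((RatFunc.X - RatFunc.C (b i * ω ^ (j:ℕ)))⁻¹ : RatFunc ℂ) ^ (k+1)
                = ((RatFunc.X : RatFunc ℂ) - RatFunc.C (b i * ω ^ (j:ℕ))) ^ (-(k:ℤ) - 1) := by
              rw [show -(k:ℤ) - 1 = -((k + 1 : ℕ):ℤ) by push_cast; ring, zpow_neg,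
                zpow_natCast, inv_pow]
            rw [hzp, hx, mul_zpow, ← map_zpow₀ (RatFunc.C : ℂ →+* RatFunc ℂ)]
          have hsum2 : (∑ m ∈ Finset.range d,
                σ^[m] (((RatFunc.X - RatFunc.C (b i * ω ^ (j:ℕ)))⁻¹ : RatFunc ℂ) ^ (k+1)))
              = RatFunc.C ((ω ^ ((j:ℕ):ℤ)) ^ (-(k:ℤ) - 1))
                * ∑ m ∈ Finset.range d, g0 ((m:ℤ) + (-((j:ℕ):ℤ))) := by
            rw [Finset.mul_sum]
            refine Finset.sum_congr rfl fun m _ => ?_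
            rw [hrepr, iter_C_mul σ _ m]
            congr 1
            show σ^[m] (g0 (-((j:ℕ):ℤ))) = g0 ((m:ℤ) + (-((j:ℕ):ℤ)))
            simp only [hg0]
            rw [iter_g σ ω hσ hω0 (b i) (-(k:ℤ) - 1) m (-((j:ℕ):ℤ)),
              show -((j:ℕ):ℤ) + (m:ℤ) = (m:ℤ) + (-((j:ℕ):ℤ)) by ring]
          rw [hsum2, aux_shift d g0 hgper (-((j:ℕ):ℤ)), ← aux_shift d g0 hgper 1, Csmul]
          apply T.smul_mem
          have htg : (∑ m ∈ Finset.range d, g0 ((m:ℤ) + 1))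
              = ∑ j' ∈ Finset.range d,
                (RatFunc.C ω ^ (j' + 1) * RatFunc.X - RatFunc.C (b i)) ^ (-(k:ℤ) - 1) := by
            refine Finset.sum_congr rfl fun m _ => ?_
            simp only [hg0]
            rw [show ((m:ℤ) + 1) = ((m + 1 : ℕ) : ℤ) by push_cast; ring, zpow_natCast, map_pow]
          rw [htg]
          exact hgen2T (i, k)
      have hkey : ∀ x : RatFunc ℂ, x ∈ Submodule.span ℂ (Bset d s ω b)
          → (∑ m ∈ Finset.range d, σ^[m] x) ∈ T := by
        intro x hx
        induction hx using Submodule.span_induction with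
        | mem g hg => exact hgenT g hg
        | zero =>
            rw [Finset.sum_congr rfl fun m _ => iter_zero σ m, Finset.sum_const, smul_zero]
            exact T.zero_mem
        | add x y _ _ ihx ihy =>
            rw [Finset.sum_congr rfl fun m _ => iter_add σ m x y, Finset.sum_add_distrib]
            exact T.add_mem ihx ihy
        | smul a x _ ih =>
            rw [Finset.sum_congr rfl fun m _ => iter_smul σ m a x, ← Finset.smul_sum]
            exact T.smul_mem a ih
      have hsum_f : (∑ m ∈ Finset.range d, σ^[m] f) = (d:ℂ) • f := by
        rw [Finset.sum_congr rfl fun m _ => iter_fix σ f hfix m, Finset.sum_const,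
          Finset.card_range]
        exact (Nat.cast_smul_eq_nsmul ℂ d f).symm
      have hfT : f = (d:ℂ)⁻¹ • ((d:ℂ) • f) := by
        rw [smul_smul, inv_mul_cancel₀ (Nat.cast_ne_zero.mpr hd), one_smul]
      rw [hfT, ← hsum_f]
      exact T.smul_mem _ (hkey f hfN)
  · intro hf
    constructor
    · have hle : T ≤ Subalgebra.toSubmodule A := Submodule.span_le.mpr hTgenA
      exact hle hf
    · induction hf using Submodule.span_induction with
      | mem g hg => exact hσgen g hg
      | zero => exact map_zero σ
      | add x y _ _ ihx ihy => rw [map_add, ihx, ihy]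
      | smul a x _ ih => rw [AlgHom.map_smul_of_tower, ih]
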